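/- arXiv:1701.01795 — 3 statements merged into one kernel-verified Lean document; each statement's English description precedes it below -/
import Mathlib

section
/- In hyperbolic background geometry with inversive distance I ≥ 0: given radii r_i, r_j, r_k > 0 and weights I_{ij}, I_{ik}, I_{jk} ≥ 0, define edge lengths by cosh l_{ab} = cosh r_a cosh r_b + I_{ab} sinh r_a sinh r_b. If cosh² r_i > I_{jk} + 1, then l_{ij} + l_{ik} > l_{jk}. -/
/-- The inverse hyperbolic cosine on `[1, ∞)`: `arcosh x = log (x + √(x² − 1))`. -/
noncomputable def Real.arcosh' (x : ℝ) : ℝ := Real.log (x + Real.sqrt (x ^ 2 - 1))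

open Real

lemma arcosh_lt_arcosh {x y : ℝ} (hx : 1 ≤ x) (hxy : x < y) :
    Real.arcosh' x < Real.arcosh' y := by
  unfold Real.arcosh'
  have h1 : (0:ℝ) < x + Real.sqrt (x ^ 2 - 1) := by positivity
  apply Real.log_lt_log h1
  have : Real.sqrt (x ^ 2 - 1) ≤ Real.sqrt (y ^ 2 - 1) := by
    apply Real.sqrt_le_sqrt; nlinarith
  linarith

lemma arcosh_mul_le {a b : ℝ} (ha : 1 ≤ a) (hb : 1 ≤ b) :
    Real.arcosh' (a * b) ≤ Real.arcosh' a + Real.arcosh' b := by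
  unfold Real.arcosh'
  have ha2 : (0:ℝ) ≤ a ^ 2 - 1 := by nlinarith
  have hb2 : (0:ℝ) ≤ b ^ 2 - 1 := by nlinarith
  have sa := Real.sq_sqrt ha2
  have sb := Real.sq_sqrt hb2
  have sa0 := Real.sqrt_nonneg (a ^ 2 - 1)
  have sb0 := Real.sqrt_nonneg (b ^ 2 - 1)
  rw [← Real.log_mul (by positivity) (by positivity)]
  apply Real.log_le_log (by nlinarith [Real.sqrt_nonneg ((a*b)^2-1)])
  have key : Real.sqrt ((a * b) ^ 2 - 1) ≤ a * Real.sqrt (b ^ 2 - 1) + b * Real.sqrt (a ^ 2 - 1) := by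
    rw [show a * Real.sqrt (b ^ 2 - 1) + b * Real.sqrt (a ^ 2 - 1)
        = Real.sqrt ((a * Real.sqrt (b ^ 2 - 1) + b * Real.sqrt (a ^ 2 - 1)) ^ 2) from
      (Real.sqrt_sq (by positivity)).symm]
    apply Real.sqrt_le_sqrt
    nlinarith [mul_nonneg sa0 sb0, mul_nonneg (mul_nonneg (by linarith : (0:ℝ) ≤ a) (by linarith : (0:ℝ) ≤ b)) (mul_nonneg sa0 sb0)]
  nlinarith [mul_nonneg sa0 sb0]

/-- hyperbolic inversive distance edge lengths; if `cosh² rᵢ > I_jk + 1`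
then the triangle inequality `l_ij + l_ik > l_jk` holds. -/
theorem stmt_2 (ri rj rk Iij Iik Ijk : ℝ)
    (hri : 0 < ri) (hrj : 0 < rj) (hrk : 0 < rk)
    (hIij : 0 ≤ Iij) (hIik : 0 ≤ Iik) (hIjk : 0 ≤ Ijk)
    (h : Ijk + 1 < (Real.cosh ri) ^ 2) :
    Real.arcosh' (Real.cosh rj * Real.cosh rk + Ijk * Real.sinh rj * Real.sinh rk) <
      Real.arcosh' (Real.cosh ri * Real.cosh rj + Iij * Real.sinh ri * Real.sinh rj) +
      Real.arcosh' (Real.cosh ri * Real.cosh rk + Iik * Real.sinh ri * Real.sinh rk) := by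
  have ci := Real.one_lt_cosh.mpr hri.ne'
  have cj := Real.one_lt_cosh.mpr hrj.ne'
  have ck := Real.one_lt_cosh.mpr hrk.ne'
  have si := Real.sinh_pos_iff.mpr hri
  have sj := Real.sinh_pos_iff.mpr hrj
  have sk := Real.sinh_pos_iff.mpr hrk
  have sci := Real.sinh_lt_cosh ri
  have scj := Real.sinh_lt_cosh rj
  have sck := Real.sinh_lt_cosh rk
  have hA1 : 1 ≤ Real.cosh ri * Real.cosh rj + Iij * Real.sinh ri * Real.sinh rj := by
    nlinarith [mul_pos si sj]
  have hB1 : 1 ≤ Real.cosh ri * Real.cosh rk + Iik * Real.sinh ri * Real.sinh rk := by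
    nlinarith [mul_pos si sk]
  have hC1 : 1 ≤ Real.cosh rj * Real.cosh rk + Ijk * Real.sinh rj * Real.sinh rk := by
    nlinarith [mul_pos sj sk]
  have hCAB : Real.cosh rj * Real.cosh rk + Ijk * Real.sinh rj * Real.sinh rk <
      (Real.cosh ri * Real.cosh rj + Iij * Real.sinh ri * Real.sinh rj) *
      (Real.cosh ri * Real.cosh rk + Iik * Real.sinh ri * Real.sinh rk) := by
    have h1 : Real.cosh rj * Real.cosh rk + Ijk * Real.sinh rj * Real.sinh rk <
        Real.cosh ri ^ 2 * (Real.cosh rj * Real.cosh rk) := by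
      have e1 : Ijk * Real.sinh rj * Real.sinh rk ≤ Ijk * (Real.cosh rj * Real.cosh rk) := by
        have := mul_le_mul (le_of_lt scj) (le_of_lt sck) (le_of_lt sk) (by linarith)
        nlinarith
      have e2 : (Ijk + 1) * (Real.cosh rj * Real.cosh rk) <
          Real.cosh ri ^ 2 * (Real.cosh rj * Real.cosh rk) := by
        apply mul_lt_mul_of_pos_right h (by nlinarith)
      nlinarith
    have h2 : Real.cosh ri ^ 2 * (Real.cosh rj * Real.cosh rk) ≤
        (Real.cosh ri * Real.cosh rj + Iij * Real.sinh ri * Real.sinh rj) *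
        (Real.cosh ri * Real.cosh rk + Iik * Real.sinh ri * Real.sinh rk) := by
      have t1 : 0 ≤ (Real.cosh ri * Real.cosh rj) * (Iik * Real.sinh ri * Real.sinh rk) := by
        have := Real.cosh_pos (x := ri); have := Real.cosh_pos (x := rj)
        have : 0 ≤ Iik * Real.sinh ri * Real.sinh rk := by positivity
        positivity
      have t2 : 0 ≤ (Iij * Real.sinh ri * Real.sinh rj) * (Real.cosh ri * Real.cosh rk) := by
        have := Real.cosh_pos (x := ri); have := Real.cosh_pos (x := rk)
        positivity
      have t3 : 0 ≤ (Iij * Real.sinh ri * Real.sinh rj) * (Iik * Real.sinh ri * Real.sinh rk) := by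
        positivity
      nlinarith [t1, t2, t3]
    linarith
  calc Real.arcosh' (Real.cosh rj * Real.cosh rk + Ijk * Real.sinh rj * Real.sinh rk)
      < Real.arcosh' ((Real.cosh ri * Real.cosh rj + Iij * Real.sinh ri * Real.sinh rj) *
          (Real.cosh ri * Real.cosh rk + Iik * Real.sinh ri * Real.sinh rk)) :=
        arcosh_lt_arcosh hC1 hCAB
    _ ≤ _ := arcosh_mul_le hA1 hB1
end

section
/- Consider the tetrahedral triangulation of S² with vertices i, j, k, l, inversive distance I ≡ 2 on every edge, radii r_i = 1 and r_j = r_k = r_l = x > 0, and Euclidean edge lengths l_{ab} = √(r_a² + r_b² + 2 r_a r_b I_{ab}). Then every face satisfies the triangle inequalities if and only if 0 < x < 4 + √18. -/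
/-- on the tetrahedral triangulation with `I ≡ 2`, `rᵢ = 1`,
`r_j = r_k = r_l = x > 0`, the Euclidean edge lengths are
`l_ij = l_ik = l_il = √(x² + 4x + 1)` and `l_jk = l_jl = l_kl = √6 x`; every face
satisfies the (strict) triangle inequalities iff `0 < x < 4 + √18`. -/
theorem stmt_5 (x : ℝ) (hx : 0 < x) :
    (let a := Real.sqrt (x ^ 2 + 4 * x + 1)
     let b := Real.sqrt 6 * x
     -- the three isoceles faces containing vertex i, with sides a, a, b:
     ((a < a + b ∧ b < a + a) ∧
     -- the equilateral face jkl with sides b, b, b: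
      b < b + b)) ↔ x < 4 + Real.sqrt 18 := by
  simp only
  set a := Real.sqrt (x ^ 2 + 4 * x + 1) with ha
  set b := Real.sqrt 6 * x with hb
  have hbpos : 0 < b := mul_pos (Real.sqrt_pos.mpr (by norm_num)) hx
  have ha2 : a ^ 2 = x ^ 2 + 4 * x + 1 := Real.sq_sqrt (by nlinarith)
  have hb2 : b ^ 2 = 6 * x ^ 2 := by
    rw [hb, mul_pow, Real.sq_sqrt (by norm_num : (6:ℝ) ≥ 0)]
  have hanneg : 0 ≤ a := Real.sqrt_nonneg _
  have hs : Real.sqrt 18 ^ 2 = 18 := Real.sq_sqrt (by norm_num)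
  have hsnn : 0 ≤ Real.sqrt 18 := Real.sqrt_nonneg _
  have hs4 : 4 < Real.sqrt 18 := by nlinarith
  constructor
  · rintro ⟨⟨-, h⟩, -⟩
    have hsq : b ^ 2 < (a + a) ^ 2 := by
      have := mul_self_lt_mul_self hbpos.le h
      nlinarith [this]
    have hkey : x ^ 2 - 8 * x - 2 < 0 := by nlinarith
    nlinarith [mul_nonneg hsnn hsnn, sq_nonneg (x - 4 + Real.sqrt 18)]
  · intro hlt
    have hkey : b < a + a := by
      have hsq : b ^ 2 < (a + a) ^ 2 := by
        nlinarith [mul_pos (by linarith : (0:ℝ) < 4 + Real.sqrt 18 - x)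
          (by linarith : (0:ℝ) < x + Real.sqrt 18 - 4)]
      exact lt_of_pow_lt_pow_left₀ 2 (by linarith) hsq
    exact ⟨⟨by linarith, hkey⟩, by linarith⟩
end

section
/- On the tetrahedral triangulation of S² with I ≡ 2, radii r = (1, x, x, x) with 0 < x < 4+√18, the combinatorial curvatures R_a = K_a/r_a² satisfy: R_i = 2π − 6 arcsin( (√6 x/2)/√(x²+4x+1) ) and R_j = R_k = R_l = (1/x²)(2π/3 + 2 arcsin( (√6 x/2)/√(x²+4x+1) )). -/
open Real

lemma two_arcsin (s : ℝ) (h0 : 0 ≤ s) (h1 : s ≤ 1) :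
    Real.arccos (1 - 2 * s ^ 2) = 2 * Real.arcsin s := by
  have hs : Real.sin (Real.arcsin s) = s := Real.sin_arcsin (by linarith) h1
  have h2 : Real.cos (2 * Real.arcsin s) = 1 - 2 * s ^ 2 := by
    rw [Real.cos_two_mul', hs, Real.cos_arcsin, Real.sq_sqrt (by nlinarith)]; ring
  rw [← h2, Real.arccos_cos]
  · have := Real.arcsin_nonneg.mpr h0; linarith
  · have := Real.arcsin_le_pi_div_two s; linarith [Real.pi_pos]

lemma arccos_half' : Real.arccos (1/2) = Real.pi / 3 := by
  rw [← Real.cos_pi_div_three, Real.arccos_cos]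
  · positivity
  · linarith [Real.pi_pos]

/-- on the tetrahedral triangulation with `I ≡ 2`, `r = (1, x, x, x)` and
`0 < x < 4+√18`, the combinatorial curvatures `R_a = K_a / r_a²` are
`R_i = 2π − 6 arcsin((√6 x/2)/√(x²+4x+1))` and
`R_j = R_k = R_l = (1/x²)(2π/3 + 2 arcsin((√6 x/2)/√(x²+4x+1)))`.
The inner angles of the faces are expressed via the law of cosines: each face containing
`i` is isoceles with legs `a = √(x²+4x+1)` and base `b = √6 x`; the face `jkl` is
equilateral with side `b`. -/
theorem stmt_10 (x : ℝ) (hx : 0 < x) (hx' : x < 4 + Real.sqrt 18) :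
    (let a := Real.sqrt (x ^ 2 + 4 * x + 1)
     let b := Real.sqrt 6 * x
     -- apex angle at vertex i in each of the three isoceles faces (side opposite is b):
     let θi := Real.arccos ((a ^ 2 + a ^ 2 - b ^ 2) / (2 * a * a))
     -- base angle at vertex j (or k, l) in an isoceles face (side opposite is a):
     let θj := Real.arccos ((a ^ 2 + b ^ 2 - a ^ 2) / (2 * a * b))
     -- angle of the equilateral face jkl:
     let θe := Real.arccos ((b ^ 2 + b ^ 2 - b ^ 2) / (2 * b * b))
     -- curvature at i (r_i = 1): K_i = 2π − 3 θi
     ((2 * Real.pi - 3 * θi) / 1 ^ 2 =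
        2 * Real.pi - 6 * Real.arcsin ((Real.sqrt 6 * x / 2) / Real.sqrt (x ^ 2 + 4 * x + 1)) ∧
     -- curvature at j (r_j = x): K_j = 2π − 2 θj − θe
      (2 * Real.pi - (2 * θj + θe)) / x ^ 2 =
        (1 / x ^ 2) * (2 * Real.pi / 3 +
          2 * Real.arcsin ((Real.sqrt 6 * x / 2) / Real.sqrt (x ^ 2 + 4 * x + 1))))) := by
  have hA : (0:ℝ) < x ^ 2 + 4 * x + 1 := by nlinarith
  set A := x ^ 2 + 4 * x + 1 with hAdef
  have ha : 0 < Real.sqrt A := Real.sqrt_pos.mpr hA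
  have ha2 : Real.sqrt A ^ 2 = A := Real.sq_sqrt hA.le
  have h6 : (0:ℝ) < Real.sqrt 6 := Real.sqrt_pos.mpr (by norm_num)
  have h62 : Real.sqrt 6 ^ 2 = 6 := Real.sq_sqrt (by norm_num)
  have hb : 0 < Real.sqrt 6 * x := by positivity
  set s : ℝ := (Real.sqrt 6 * x / 2) / Real.sqrt A with hsdef
  have hs0 : 0 ≤ s := by positivity
  -- s ≤ 1 ⟺ √6 x ≤ 2 √A ⟺ 6x² ≤ 4A ⟺ (x-4)² ≤ 18
  have hsq : (x - 4) ^ 2 < 18 := by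
    have h18 : Real.sqrt 18 ^ 2 = 18 := Real.sq_sqrt (by norm_num)
    have h18pos : (4:ℝ) < Real.sqrt 18 := by nlinarith [Real.sqrt_nonneg 18]
    have : |x - 4| < Real.sqrt 18 := abs_lt.mpr ⟨by linarith, by linarith⟩
    calc (x-4)^2 = |x-4|^2 := (sq_abs _).symm
    _ < Real.sqrt 18 ^ 2 := by gcongr
    _ = 18 := h18
  have hs1 : s ≤ 1 := by
    rw [hsdef, div_le_one ha]
    have e : (Real.sqrt 6 * x / 2) ^ 2 = 6 * x ^ 2 / 4 := by
      rw [div_pow, mul_pow, h62]; norm_num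
    nlinarith [Real.sqrt_nonneg A, mul_pos h6 hx, ha2, e, hsq]
  -- the three angle values
  have hθj : (Real.sqrt A ^ 2 + (Real.sqrt 6 * x) ^ 2 - Real.sqrt A ^ 2) /
      (2 * Real.sqrt A * (Real.sqrt 6 * x)) = s := by
    rw [hsdef]; field_simp; ring
  have hθe : ((Real.sqrt 6 * x) ^ 2 + (Real.sqrt 6 * x) ^ 2 - (Real.sqrt 6 * x) ^ 2) /
      (2 * (Real.sqrt 6 * x) * (Real.sqrt 6 * x)) = 1 / 2 := by
    field_simp; ring
  have hθi : (Real.sqrt A ^ 2 + Real.sqrt A ^ 2 - (Real.sqrt 6 * x) ^ 2) /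
      (2 * Real.sqrt A * Real.sqrt A) = 1 - 2 * s ^ 2 := by
    have e1 : s ^ 2 = 6 * x ^ 2 / (4 * A) := by
      rw [hsdef, div_pow, div_pow, mul_pow, h62, ha2]; field_simp; norm_num
    rw [ha2, mul_pow, h62, e1, show 2 * Real.sqrt A * Real.sqrt A = 2 * A by rw [mul_assoc, Real.mul_self_sqrt hA.le]]
    field_simp
    ring
  simp only
  rw [hθj, hθe, hθi, arccos_half', two_arcsin s hs0 hs1, Real.arccos_eq_pi_div_two_sub_arcsin]
  constructor
  · ring
  · field_simp; ring
end
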